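/- Let A ∈ ℝ^{m×n}, b ∈ ℝᵐ, τ > 0, ν > 0, w ∈ ℝⁿ, and let B ∈ ℝ^{n×n} be symmetric such that Q := ν B + I is positive definite. (i) If there exists y ∈ ℝᵐ with (A Q⁻¹ Aᵀ) y = A Q⁻¹ w + b and ‖y‖₂ ≤ ν τ, then Q⁻¹(w − Aᵀ y) is a global minimizer of u ↦ (1/(2ν))‖u − w‖₂² + τ‖A u + b‖₂ + (1/2) uᵀ B u over ℝⁿ. (ii) If α* > 0 satisfies ‖(A Q⁻¹ Aᵀ + α* I)⁻¹ (A Q⁻¹ w + b)‖₂ = ν τ, then Q⁻¹(w − Aᵀ (A Q⁻¹ Aᵀ + α* I)⁻¹ (A Q⁻¹ w + b)) is the unique global minimizer of u ↦ (1/(2ν))‖u − w‖₂² + τ‖A u + b‖₂ + (1/2) uᵀ B u over ℝⁿ. -/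

import Mathlib

open Matrix

/-- The Euclidean (`ℓ₂`) norm of a vector in `Fin k → ℝ`. -/
noncomputable def norm2 {k : ℕ} (v : Fin k → ℝ) : ℝ := Real.sqrt (∑ i, v i ^ 2)

/-- Quadratic proximal objective `u ↦ (1/(2ν))‖u − w‖₂² + τ‖Au + b‖₂ + (1/2)uᵀBu`. -/
noncomputable def proxObjQ {m n : ℕ} (A : Matrix (Fin m) (Fin n) ℝ) (b : Fin m → ℝ)
    (τ ν : ℝ) (w : Fin n → ℝ) (B : Matrix (Fin n) (Fin n) ℝ) (u : Fin n → ℝ) : ℝ :=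
  1 / (2 * ν) * norm2 (u - w) ^ 2 + τ * norm2 (A.mulVec u + b) + 1 / 2 * (u ⬝ᵥ B.mulVec u)

lemma norm2_nonneg {k : ℕ} (v : Fin k → ℝ) : 0 ≤ norm2 v := Real.sqrt_nonneg _

lemma norm2_sq {k : ℕ} (v : Fin k → ℝ) : norm2 v ^ 2 = v ⬝ᵥ v := by
  rw [norm2, Real.sq_sqrt (by positivity)]
  simp [dotProduct, sq]

lemma norm2_zero' {k : ℕ} : norm2 (0 : Fin k → ℝ) = 0 := by simp [norm2]

lemma norm2_smul {k : ℕ} (c : ℝ) (hc : 0 ≤ c) (v : Fin k → ℝ) :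
    norm2 (c • v) = c * norm2 v := by
  rw [norm2, norm2]
  have h : ∑ i, (c • v) i ^ 2 = c ^ 2 * ∑ i, v i ^ 2 := by
    rw [Finset.mul_sum]; congr 1; ext i; simp [mul_pow]
  rw [h, Real.sqrt_mul (sq_nonneg c), Real.sqrt_sq hc]

lemma dot_le_norm2 {k : ℕ} (x y : Fin k → ℝ) : x ⬝ᵥ y ≤ norm2 x * norm2 y := by
  have h := Finset.sum_mul_sq_le_sq_mul_sq Finset.univ x y
  have h2 : x ⬝ᵥ y ≤ Real.sqrt ((∑ i, x i ^ 2) * (∑ i, y i ^ 2)) := by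
    calc x ⬝ᵥ y ≤ |x ⬝ᵥ y| := le_abs_self _
      _ = Real.sqrt ((x ⬝ᵥ y) ^ 2) := (Real.sqrt_sq_eq_abs _).symm
      _ ≤ _ := Real.sqrt_le_sqrt (by simpa [dotProduct] using h)
  rw [norm2, norm2, ← Real.sqrt_mul (by positivity)]
  exact h2

lemma prox_diff {m n : ℕ} (A : Matrix (Fin m) (Fin n) ℝ) (b : Fin m → ℝ)
    (τ ν : ℝ) (hν : 0 < ν) (w : Fin n → ℝ)
    (B : Matrix (Fin n) (Fin n) ℝ) (hB : B.IsSymm)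
    (Q : Matrix (Fin n) (Fin n) ℝ) (hQ : Q = ν • B + 1)
    (y : Fin m → ℝ) (x : Fin n → ℝ) (hx : Q.mulVec x = w - Aᵀ.mulVec y)
    (u : Fin n → ℝ) :
    proxObjQ A b τ ν w B u - proxObjQ A b τ ν w B x =
      1 / (2 * ν) * ((u - x) ⬝ᵥ Q.mulVec (u - x))
        - 1 / ν * (y ⬝ᵥ (A.mulVec u + b)) + 1 / ν * (y ⬝ᵥ (A.mulVec x + b))
        + τ * (norm2 (A.mulVec u + b) - norm2 (A.mulVec x + b)) := by
  have hν' : ν ≠ 0 := ne_of_gt hν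
  have hAy : ∀ z : Fin n → ℝ, z ⬝ᵥ Aᵀ.mulVec y = y ⬝ᵥ A.mulVec z := by
    intro z
    rw [Matrix.dotProduct_mulVec, Matrix.vecMul_transpose, dotProduct_comm]
  have hQdot : ∀ a c : Fin n → ℝ, a ⬝ᵥ Q.mulVec c = ν * (a ⬝ᵥ B.mulVec c) + a ⬝ᵥ c := by
    intro a c
    rw [hQ, Matrix.add_mulVec, Matrix.smul_mulVec, Matrix.one_mulVec, dotProduct_add,
      dotProduct_smul, smul_eq_mul]
  have hBsym : x ⬝ᵥ B.mulVec u = u ⬝ᵥ B.mulVec x := by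
    rw [Matrix.dotProduct_mulVec]
    rw [show x ᵥ* B = B.mulVec x from by rw [← hB.eq, Matrix.vecMul_transpose, hB.eq]]
    exact dotProduct_comm _ _
  have h1 : u ⬝ᵥ Q.mulVec x = u ⬝ᵥ w - y ⬝ᵥ A.mulVec u := by
    rw [hx, dotProduct_sub, hAy]
  have h2 : x ⬝ᵥ Q.mulVec x = x ⬝ᵥ w - y ⬝ᵥ A.mulVec x := by
    rw [hx, dotProduct_sub, hAy]
  have e1 : (u - x) ⬝ᵥ Q.mulVec (u - x)
      = u ⬝ᵥ Q.mulVec u - 2 * (u ⬝ᵥ Q.mulVec x) + x ⬝ᵥ Q.mulVec x := by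
    rw [Matrix.mulVec_sub, dotProduct_sub, sub_dotProduct, sub_dotProduct,
      hQdot x u, hBsym, ← dotProduct_comm u x, ← hQdot u x]
    ring
  have euw : (u - w) ⬝ᵥ (u - w) = u ⬝ᵥ u - 2 * (u ⬝ᵥ w) + w ⬝ᵥ w := by
    rw [dotProduct_sub, sub_dotProduct, sub_dotProduct, dotProduct_comm w u]; ring
  have exw : (x - w) ⬝ᵥ (x - w) = x ⬝ᵥ x - 2 * (x ⬝ᵥ w) + w ⬝ᵥ w := by
    rw [dotProduct_sub, sub_dotProduct, sub_dotProduct, dotProduct_comm w x]; ring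
  have hQuu := hQdot u u
  have hQxx := hQdot x x
  have hyb : ∀ z : Fin n → ℝ, y ⬝ᵥ (A.mulVec z + b) = y ⬝ᵥ A.mulVec z + y ⬝ᵥ b :=
    fun z => dotProduct_add _ _ _
  simp only [proxObjQ, norm2_sq]
  rw [e1, euw, exw, hyb, hyb]
  field_simp
  linear_combination (1 : ℝ) * ((-1 : ℝ) * hQuu + 2 * h1 + hQxx - 2 * h2)

/-- **Corollary `cor:prox-quadratic` (proximal operator with a quadratic term).**
Let `B = Bᵀ` and `Q := νB + I` be positive definite.
(i) If `(AQ⁻¹Aᵀ)y = AQ⁻¹w + b` with `‖y‖₂ ≤ ντ`, then `Q⁻¹(w − Aᵀy)` is a global minimizer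
of `u ↦ (1/(2ν))‖u − w‖₂² + τ‖Au + b‖₂ + (1/2)uᵀBu`.
(ii) If `α* > 0` with `‖(AQ⁻¹Aᵀ + α*I)⁻¹(AQ⁻¹w + b)‖₂ = ντ`, then
`Q⁻¹(w − Aᵀ(AQ⁻¹Aᵀ + α*I)⁻¹(AQ⁻¹w + b))` is its unique global minimizer. -/
theorem stmt_17 {m n : ℕ} (A : Matrix (Fin m) (Fin n) ℝ) (b : Fin m → ℝ)
    (τ ν : ℝ) (hτ : 0 < τ) (hν : 0 < ν) (w : Fin n → ℝ)
    (B : Matrix (Fin n) (Fin n) ℝ) (hB : B.IsSymm)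
    (Q : Matrix (Fin n) (Fin n) ℝ) (hQ : Q = ν • B + 1) (hQpd : Q.PosDef) :
    (∀ y : Fin m → ℝ, (A * Q⁻¹ * Aᵀ).mulVec y = A.mulVec (Q⁻¹.mulVec w) + b →
      norm2 y ≤ ν * τ →
      ∀ u : Fin n → ℝ,
        proxObjQ A b τ ν w B (Q⁻¹.mulVec (w - Aᵀ.mulVec y)) ≤ proxObjQ A b τ ν w B u) ∧
    (∀ αstar : ℝ, 0 < αstar →
      norm2 ((A * Q⁻¹ * Aᵀ + αstar • (1 : Matrix (Fin m) (Fin m) ℝ))⁻¹.mulVec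
          (A.mulVec (Q⁻¹.mulVec w) + b)) = ν * τ →
      ∀ u : Fin n → ℝ,
        u ≠ Q⁻¹.mulVec (w - Aᵀ.mulVec ((A * Q⁻¹ * Aᵀ + αstar •
              (1 : Matrix (Fin m) (Fin m) ℝ))⁻¹.mulVec (A.mulVec (Q⁻¹.mulVec w) + b))) →
        proxObjQ A b τ ν w B (Q⁻¹.mulVec (w - Aᵀ.mulVec ((A * Q⁻¹ * Aᵀ + αstar •
              (1 : Matrix (Fin m) (Fin m) ℝ))⁻¹.mulVec (A.mulVec (Q⁻¹.mulVec w) + b))))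
          < proxObjQ A b τ ν w B u) := by
  have hν' : ν ≠ 0 := ne_of_gt hν
  have hdet : IsUnit Q.det := (Matrix.isUnit_iff_isUnit_det Q).mp hQpd.isUnit
  have hQQ : Q * Q⁻¹ = 1 := Matrix.mul_nonsing_inv Q hdet
  constructor
  · -- part (i)
    intro y hy hnorm u
    set x := Q⁻¹.mulVec (w - Aᵀ.mulVec y) with hxdef
    have hx : Q.mulVec x = w - Aᵀ.mulVec y := by
      rw [hxdef, Matrix.mulVec_mulVec, hQQ, Matrix.one_mulVec]
    have hAxb : A.mulVec x + b = 0 := by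
      have h3 : A.mulVec x = A.mulVec (Q⁻¹.mulVec w) - (A * Q⁻¹ * Aᵀ).mulVec y := by
        rw [hxdef]
        simp [Matrix.mulVec_sub, Matrix.mulVec_mulVec, Matrix.mul_assoc]
      rw [h3, hy]
      abel
    have key := prox_diff A b τ ν hν w B hB Q hQ y x hx u
    rw [hAxb, norm2_zero', dotProduct_zero] at key
    have hD : 0 ≤ (u - x) ⬝ᵥ Q.mulVec (u - x) := by
      have := hQpd.posSemidef.dotProduct_mulVec_nonneg (u - x)
      simpa using this
    have hcs : y ⬝ᵥ (A.mulVec u + b) ≤ ν * τ * norm2 (A.mulVec u + b) :=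
      le_trans (dot_le_norm2 y _) (mul_le_mul_of_nonneg_right hnorm (norm2_nonneg _))
    have h4 : 1 / ν * (y ⬝ᵥ (A.mulVec u + b)) ≤ τ * norm2 (A.mulVec u + b) := by
      have h5 := mul_le_mul_of_nonneg_left hcs (show (0:ℝ) ≤ 1 / ν by positivity)
      have h6 : 1 / ν * (ν * τ * norm2 (A.mulVec u + b)) = τ * norm2 (A.mulVec u + b) := by
        field_simp
      linarith
    have h7 : 0 ≤ 1 / (2 * ν) * ((u - x) ⬝ᵥ Q.mulVec (u - x)) :=
      mul_nonneg (by positivity) hD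
    linarith
  · -- part (ii)
    intro α hα hnorm u hne
    set M := A * Q⁻¹ * Aᵀ + α • (1 : Matrix (Fin m) (Fin m) ℝ) with hMdef
    set y := M⁻¹.mulVec (A.mulVec (Q⁻¹.mulVec w) + b) with hydef
    set x := Q⁻¹.mulVec (w - Aᵀ.mulVec y) with hxdef
    have hS : (A * Q⁻¹ * Aᵀ).PosSemidef := by
      have h1 := hQpd.inv.posSemidef.mul_mul_conjTranspose_same A
      simpa using h1
    have hsm : (α • (1 : Matrix (Fin m) (Fin m) ℝ)).PosDef := by
      refine Matrix.PosDef.of_dotProduct_mulVec_pos ?_ ?_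
      · simp [Matrix.IsHermitian]
      · intro z hz
        have h : 0 < star z ⬝ᵥ z := Matrix.dotProduct_star_self_pos_iff.mpr hz
        simp only [Matrix.smul_mulVec, Matrix.one_mulVec, dotProduct_smul, smul_eq_mul]
        simpa using mul_pos hα (by simpa using h)
    have hMpd : M.PosDef := Matrix.PosDef.posSemidef_add hS hsm
    have hMdet : IsUnit M.det := (Matrix.isUnit_iff_isUnit_det M).mp hMpd.isUnit
    have hMM : M * M⁻¹ = 1 := Matrix.mul_nonsing_inv M hMdet
    have hMy : M.mulVec y = A.mulVec (Q⁻¹.mulVec w) + b := by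
      rw [hydef, Matrix.mulVec_mulVec, hMM, Matrix.one_mulVec]
    have hx : Q.mulVec x = w - Aᵀ.mulVec y := by
      rw [hxdef, Matrix.mulVec_mulVec, hQQ, Matrix.one_mulVec]
    have hAxb : A.mulVec x + b = α • y := by
      have h3 : A.mulVec x = A.mulVec (Q⁻¹.mulVec w) - (A * Q⁻¹ * Aᵀ).mulVec y := by
        rw [hxdef]
        simp [Matrix.mulVec_sub, Matrix.mulVec_mulVec, Matrix.mul_assoc]
      have h4 : (A * Q⁻¹ * Aᵀ).mulVec y = M.mulVec y - α • y := by
        rw [hMdef, Matrix.add_mulVec, Matrix.smul_mulVec, Matrix.one_mulVec]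
        abel
      rw [h3, h4, hMy]
      abel
    have key := prox_diff A b τ ν hν w B hB Q hQ y x hx u
    rw [hAxb] at key
    have hn2 : norm2 (α • y) = α * (ν * τ) := by rw [norm2_smul α hα.le, hnorm]
    have hdot : y ⬝ᵥ (α • y) = α * (ν * τ) ^ 2 := by
      rw [dotProduct_smul, smul_eq_mul, ← norm2_sq, hnorm]
    rw [hn2, hdot] at key
    have hd : u - x ≠ 0 := sub_ne_zero.mpr hne
    have hD : 0 < (u - x) ⬝ᵥ Q.mulVec (u - x) := by
      have := hQpd.dotProduct_mulVec_pos hd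
      simpa using this
    have hcs : y ⬝ᵥ (A.mulVec u + b) ≤ ν * τ * norm2 (A.mulVec u + b) := by
      have := dot_le_norm2 y (A.mulVec u + b)
      rw [hnorm] at this
      exact this
    have h4 : 1 / ν * (y ⬝ᵥ (A.mulVec u + b)) ≤ τ * norm2 (A.mulVec u + b) := by
      have h5 := mul_le_mul_of_nonneg_left hcs (show (0:ℝ) ≤ 1 / ν by positivity)
      have h6 : 1 / ν * (ν * τ * norm2 (A.mulVec u + b)) = τ * norm2 (A.mulVec u + b) := by
        field_simp
      linarith
    have h7 : 0 < 1 / (2 * ν) * ((u - x) ⬝ᵥ Q.mulVec (u - x)) :=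
      mul_pos (by positivity) hD
    have h8 : 1 / ν * (α * (ν * τ) ^ 2) = τ * (α * (ν * τ)) := by
      field_simp
    linarith
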